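/- If f : [a,b] → ℝ is twice differentiable with f''(u) ≥ ρ > 0 (or f''(u) ≤ -ρ < 0) on [a,b], then |Σ_{a ≤ n ≤ b} e^{2πi f(n)}| ≤ (|f'(b) - f'(a)| + 2)(4ρ^{-1/2} + C) for an absolute constant C, where the sum is over integers n in [a,b]. -/

import Mathlib

open scoped Real
open Finset


noncomputable def wfun (t : ℝ) : ℂ :=
  -(1/2 : ℂ) - (Complex.I/2) * ((Real.cos (Real.pi*t) / Real.sin (Real.pi*t) : ℝ) : ℂ)

lemma sin_pos01 {t : ℝ} (h0 : 0 < t) (h1 : t < 1) : 0 < Real.sin (Real.pi * t) := by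
  apply Real.sin_pos_of_pos_of_lt_pi (by positivity)
  nlinarith [Real.pi_pos]

lemma exp_two_pi_eq (t : ℝ) :
    Complex.exp (2*Real.pi*Complex.I*t)
      = 1 - 2*((Real.sin (Real.pi*t) : ℂ))^2
        + 2*(Real.sin (Real.pi*t) : ℂ)*(Real.cos (Real.pi*t) : ℂ)*Complex.I := by
  have he : (2*Real.pi*Complex.I*t : ℂ) = ((2*Real.pi*t : ℝ) : ℂ) * Complex.I := by
    push_cast; ring
  rw [he, Complex.exp_mul_I, ← Complex.ofReal_cos, ← Complex.ofReal_sin]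
  have hc2 : Real.cos (2*Real.pi*t) = 1 - 2 * Real.sin (Real.pi*t)^2 := by
    have h : 2*Real.pi*t = 2*(Real.pi*t) := by ring
    rw [h, Real.cos_two_mul']
    nlinarith [Real.sin_sq_add_cos_sq (Real.pi*t)]
  have hs2 : Real.sin (2*Real.pi*t) = 2 * Real.sin (Real.pi*t) * Real.cos (Real.pi*t) := by
    have h : 2*Real.pi*t = 2*(Real.pi*t) := by ring
    rw [h, Real.sin_two_mul]
  rw [hc2, hs2]
  push_cast
  ring

lemma wfun_mul {t : ℝ} (h0 : 0 < t) (h1 : t < 1) :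
    (Complex.exp (2*Real.pi*Complex.I*t) - 1) * wfun t = 1 := by
  have hs := sin_pos01 h0 h1
  set S : ℂ := (Real.sin (Real.pi*t) : ℂ) with hS
  set C : ℂ := (Real.cos (Real.pi*t) : ℂ) with hC
  have hSne : S ≠ 0 := by
    simp only [hS, ne_eq, Complex.ofReal_eq_zero]; exact ne_of_gt hs
  have hw : wfun t = (-S - Complex.I*C) / (2*S) := by
    rw [wfun, Complex.ofReal_div, ← hS, ← hC]
    field_simp
  have hpy : S^2 + C^2 = 1 := by
    rw [hS, hC]
    exact_mod_cast Real.sin_sq_add_cos_sq (Real.pi*t)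
  have hkey : (Complex.exp (2*Real.pi*Complex.I*t) - 1) * (-S - Complex.I*C) = 2*S := by
    rw [exp_two_pi_eq, ← hS, ← hC]
    linear_combination (-2*S*C^2) * Complex.I_sq + (2*S) * hpy
  rw [hw, mul_div_assoc', hkey]
  field_simp

lemma sin_ge {δ t : ℝ} (hδ : 0 < δ) (h1 : δ ≤ t) (h2 : t ≤ 1 - δ) :
    2*δ ≤ Real.sin (Real.pi*t) := by
  have hπ := Real.pi_pos
  rcases le_or_gt t (1/2) with h | h
  · have := Real.mul_le_sin (x := Real.pi*t) (by nlinarith) (by nlinarith)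
    have he : 2/Real.pi*(Real.pi*t) = 2*t := by field_simp
    rw [he] at this
    nlinarith
  · have hrw : Real.sin (Real.pi*t) = Real.sin (Real.pi - Real.pi*t) := by
      rw [Real.sin_pi_sub]
    have := Real.mul_le_sin (x := Real.pi - Real.pi*t) (by nlinarith) (by nlinarith)
    have he : 2/Real.pi*(Real.pi - Real.pi*t) = 2*(1-t) := by field_simp
    rw [he] at this
    nlinarith

lemma wfun_norm {δ t : ℝ} (hδ : 0 < δ) (h1 : δ ≤ t) (h2 : t ≤ 1 - δ) :
    ‖wfun t‖ ≤ 1/(4*δ) := by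
  have hδ2 : δ ≤ 1/2 := by linarith
  have hs2 : 2*δ ≤ Real.sin (Real.pi*t) := sin_ge hδ h1 h2
  have hs : 0 < Real.sin (Real.pi*t) := by linarith
  set q : ℝ := Real.cos (Real.pi*t) / Real.sin (Real.pi*t) with hq
  have hrw : wfun t = ((-1/2 : ℝ) : ℂ) + ((-q/2 : ℝ) : ℂ)*Complex.I := by
    rw [wfun, ← hq]; push_cast; ring
  rw [hrw, Complex.norm_add_mul_I]
  have hpy := Real.sin_sq_add_cos_sq (Real.pi*t)
  have hkey : (-1/2 : ℝ)^2 + (-q/2)^2 ≤ (1/(4*δ))^2 := by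
    have hse : q^2 = Real.cos (Real.pi*t)^2 / Real.sin (Real.pi*t)^2 := by
      rw [hq]; field_simp
    have h1s : (-1/2 : ℝ)^2 + (-q/2)^2 = 1/(4*Real.sin (Real.pi*t)^2) := by
      rw [show ((-q/2)^2 : ℝ) = q^2/4 by ring, hse]
      field_simp
      nlinarith
    rw [h1s, show ((1/(4*δ))^2 : ℝ) = 1/(16*δ^2) by ring,
      div_le_div_iff₀ (by positivity) (by positivity)]
    nlinarith
  calc Real.sqrt ((-1/2 : ℝ)^2 + (-q/2)^2) ≤ Real.sqrt ((1/(4*δ))^2) :=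
        Real.sqrt_le_sqrt hkey
    _ = 1/(4*δ) := Real.sqrt_sq (by positivity)

lemma cot_diff_nonneg {s t : ℝ} (h0 : 0 < s) (hst : s ≤ t) (h1 : t < 1) :
    0 ≤ Real.cos (Real.pi*s)/Real.sin (Real.pi*s) - Real.cos (Real.pi*t)/Real.sin (Real.pi*t) := by
  have hss := sin_pos01 h0 (lt_of_le_of_lt hst h1)
  have hts := sin_pos01 (lt_of_lt_of_le h0 hst) h1
  have hπ := Real.pi_pos
  have key : 0 ≤ Real.sin (Real.pi*t - Real.pi*s) := by
    apply Real.sin_nonneg_of_nonneg_of_le_pi (by nlinarith)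
    nlinarith
  rw [Real.sin_sub] at key
  rw [div_sub_div _ _ (ne_of_gt hss) (ne_of_gt hts), le_div_iff₀ (by positivity)]
  nlinarith

lemma wfun_sub {s t : ℝ} (h0 : 0 < s) (hst : s ≤ t) (h1 : t < 1) :
    ‖wfun s - wfun t‖
      = (Real.cos (Real.pi*s)/Real.sin (Real.pi*s) - Real.cos (Real.pi*t)/Real.sin (Real.pi*t))/2 := by
  set qs : ℝ := Real.cos (Real.pi*s) / Real.sin (Real.pi*s) with hqs
  set qt : ℝ := Real.cos (Real.pi*t) / Real.sin (Real.pi*t) with hqt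
  have hrw : wfun s - wfun t = ((0 : ℝ) : ℂ) + (((qt - qs)/2 : ℝ) : ℂ)*Complex.I := by
    rw [wfun, wfun, ← hqs, ← hqt]; push_cast; ring
  rw [hrw, Complex.norm_add_mul_I]
  have hd := cot_diff_nonneg h0 hst h1
  rw [show (0:ℝ)^2 + ((qt - qs)/2)^2 = ((qs - qt)/2)^2 by ring]
  rw [Real.sqrt_sq (by rw [hqs, hqt]; linarith)]

lemma abel_id (k : ℕ) : ∀ (z W : ℕ → ℂ), (∀ i < k+1, z i = (z (i+1) - z i) * W i) →
    ∑ i ∈ Finset.range (k+2), z i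
      = z (k+1) * W k - z 0 * W 0
        + ∑ i ∈ Finset.range k, z (i+1) * (W i - W (i+1)) + z (k+1) := by
  induction k with
  | zero =>
      intro z W h
      have h0 := h 0 (by norm_num)
      simp [Finset.sum_range_succ]
      linear_combination h0
  | succ k ih =>
      intro z W h
      have hih := ih z W (fun i hi => h i (by omega))
      rw [Finset.sum_range_succ, hih, Finset.sum_range_succ]
      have hk := h (k+1) (by omega)
      linear_combination hk

lemma KL {δ : ℝ} (hδ : 0 < δ) (hδ2 : δ ≤ 1/2) (m : ℕ) (z : ℕ → ℂ) (θ : ℕ → ℝ)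
    (hz : ∀ i, i ≤ m → ‖z i‖ = 1)
    (hrec : ∀ i, i < m → z (i+1) = z i * Complex.exp (2*Real.pi*Complex.I*(θ i)))
    (hθ : ∀ i, i < m → δ ≤ θ i ∧ θ i ≤ 1 - δ)
    (hmono : ∀ i, i+1 < m → θ i ≤ θ (i+1)) :
    ‖∑ i ∈ Finset.range (m+1), z i‖ ≤ 1/δ + 1 := by
  have hδinv : 0 < 1/δ := by positivity
  match m with
  | 0 =>
      simp only [zero_add, Finset.sum_range_one]
      rw [hz 0 le_rfl]; linarith
  | Nat.succ k =>
  set W : ℕ → ℂ := fun i => wfun (θ i) with hW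
  have hcrit : ∀ i, i < k+1 → z i = (z (i+1) - z i) * W i := by
    intro i hi
    obtain ⟨hl, hr⟩ := hθ i hi
    have hmul := wfun_mul (t := θ i) (by linarith) (by linarith)
    rw [hrec i hi]
    calc z i = z i * ((Complex.exp (2*Real.pi*Complex.I*(θ i)) - 1) * wfun (θ i)) := by
          rw [hmul]; ring
      _ = (z i * Complex.exp (2*Real.pi*Complex.I*(θ i)) - z i) * W i := by rw [hW]; ring
  rw [abel_id k z W hcrit]
  -- bound the four pieces
  have hz0 : ‖z 0‖ = 1 := hz 0 (by omega)
  have hzk : ‖z (k+1)‖ = 1 := hz (k+1) le_rfl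
  have hW0 : ‖W 0‖ ≤ 1/(4*δ) := wfun_norm hδ (hθ 0 (by omega)).1 (hθ 0 (by omega)).2
  have hWk : ‖W k‖ ≤ 1/(4*δ) := wfun_norm hδ (hθ k (by omega)).1 (hθ k (by omega)).2
  set c : ℕ → ℝ := fun i => Real.cos (Real.pi*(θ i))/Real.sin (Real.pi*(θ i))/2 with hc
  have hsum : ∀ i, i < k → ‖z (i+1) * (W i - W (i+1))‖ = c i - c (i+1) := by
    intro i hi
    rw [norm_mul, hz (i+1) (by omega), one_mul, hW]
    have h1 := hθ i (by omega)
    have h2 := hθ (i+1) (by omega)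
    have := wfun_sub (s := θ i) (t := θ (i+1)) (by linarith [h1.1])
      (hmono i (by omega)) (by linarith [h2.2])
    rw [this, hc]
    ring
  have htel : ∑ i ∈ Finset.range k, ‖z (i+1) * (W i - W (i+1))‖ = c 0 - c k := by
    rw [Finset.sum_congr rfl (fun i hi => hsum i (Finset.mem_range.mp hi))]
    exact Finset.sum_range_sub' c k
  have hcot : ∀ i, i < k+1 → c i ≤ 1/(4*δ) ∧ -(1/(4*δ)) ≤ c i := by
    intro i hi
    obtain ⟨hl, hr⟩ := hθ i hi
    constructor
    · have h := cot_diff_nonneg (s := δ) (t := θ i) hδ hl (by linarith)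
      have hb : Real.cos (Real.pi*δ)/Real.sin (Real.pi*δ) ≤ 1/(2*δ) := by
        have hsδ : 2*δ ≤ Real.sin (Real.pi*δ) := sin_ge hδ le_rfl (by linarith)
        have hsδ' : 0 < Real.sin (Real.pi*δ) := by linarith
        rw [div_le_div_iff₀ hsδ' (by positivity)]
        nlinarith [Real.cos_le_one (Real.pi*δ), Real.neg_one_le_cos (Real.pi*δ)]
      have hhalf : 1/(2*δ) = 2*(1/(4*δ)) := by field_simp; ring
      rw [hc]
      simp only
      linarith
    · have h := cot_diff_nonneg (s := θ i) (t := 1-δ) (by linarith) hr (by linarith)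
      have hb : -(1/(2*δ)) ≤ Real.cos (Real.pi*(1-δ))/Real.sin (Real.pi*(1-δ)) := by
        have hrs : Real.sin (Real.pi*(1-δ)) = Real.sin (Real.pi*δ) := by
          rw [show Real.pi*(1-δ) = Real.pi - Real.pi*δ by ring, Real.sin_pi_sub]
        have hrc : Real.cos (Real.pi*(1-δ)) = -Real.cos (Real.pi*δ) := by
          rw [show Real.pi*(1-δ) = Real.pi - Real.pi*δ by ring, Real.cos_pi_sub]
        have hsδ : 2*δ ≤ Real.sin (Real.pi*δ) := sin_ge hδ le_rfl (by linarith)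
        have hsδ' : 0 < Real.sin (Real.pi*δ) := by linarith
        rw [hrs, hrc, neg_div, neg_le_neg_iff, div_le_div_iff₀ hsδ' (by positivity)]
        nlinarith [Real.cos_le_one (Real.pi*δ), Real.neg_one_le_cos (Real.pi*δ)]
      have hhalf : 1/(2*δ) = 2*(1/(4*δ)) := by field_simp; ring
      rw [hc]
      simp only
      linarith
  calc ‖z (k+1) * W k - z 0 * W 0 + ∑ i ∈ Finset.range k, z (i+1) * (W i - W (i+1)) + z (k+1)‖
      ≤ ‖z (k+1) * W k - z 0 * W 0 + ∑ i ∈ Finset.range k, z (i+1) * (W i - W (i+1))‖ + ‖z (k+1)‖ :=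
        norm_add_le _ _
    _ ≤ ‖z (k+1) * W k - z 0 * W 0‖ + ‖∑ i ∈ Finset.range k, z (i+1) * (W i - W (i+1))‖ + ‖z (k+1)‖ := by
        gcongr; exact norm_add_le _ _
    _ ≤ (‖z (k+1) * W k‖ + ‖z 0 * W 0‖) + (∑ i ∈ Finset.range k, ‖z (i+1) * (W i - W (i+1))‖) + 1 := by
        gcongr
        · exact norm_sub_le _ _
        · exact norm_sum_le _ _
        · rw [hzk]
    _ ≤ (1/(4*δ) + 1/(4*δ)) + (c 0 - c k) + 1 := by
        gcongr
        · rw [norm_mul, hzk, one_mul]; exact hWk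
        · rw [norm_mul, hz0, one_mul]; exact hW0
        · rw [htel]
    _ ≤ (1/(4*δ) + 1/(4*δ)) + (1/(4*δ) + 1/(4*δ)) + 1 := by
        have h1 := (hcot 0 (by omega)).1
        have h2 := (hcot k (by omega)).2
        gcongr
        linarith
    _ = 1/δ + 1 := by field_simp; ring

lemma sum_Icc_int (p r : ℤ) (h : p ≤ r) (F : ℤ → ℂ) :
    ∑ n ∈ Finset.Icc p r, F n = ∑ i ∈ Finset.range ((r - p).toNat + 1), F (p + i) := by
  apply Finset.sum_nbij' (fun n => (n - p).toNat) (fun i => p + (i : ℤ))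
  · intro n hn
    rw [Finset.mem_Icc] at hn
    rw [Finset.mem_range]
    omega
  · intro i hi
    rw [Finset.mem_range] at hi
    rw [Finset.mem_Icc]
    omega
  · intro n hn
    rw [Finset.mem_Icc] at hn
    omega
  · intro i hi
    rw [Finset.mem_range] at hi
    omega
  · intro n hn
    rw [Finset.mem_Icc] at hn
    congr 1
    omega

lemma pair_card (p : ℤ → Prop) [DecidablePred p] (hp : ∀ n, p n → ¬ p (n+1)) (x : ℤ) :
    ((Finset.Icc x (x+1)).filter p).card ≤ 1 := by
  apply Finset.card_le_one.mpr
  intro a ha b hb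
  rw [Finset.mem_filter, Finset.mem_Icc] at ha hb
  by_contra hab
  have hax : a = x ∨ a = x+1 := by omega
  have hbx : b = x ∨ b = x+1 := by omega
  rcases hax with h|h <;> rcases hbx with h'|h' <;>
    first | omega | exact hp x (h ▸ ha.2) (h' ▸ hb.2) | exact hp x (h' ▸ hb.2) (h ▸ ha.2)

lemma alt_count (p : ℤ → Prop) [DecidablePred p] (hp : ∀ n, p n → ¬ p (n+1)) :
    ∀ (k : ℕ) (x : ℤ), 2 * (((Finset.Icc x (x + (k:ℤ))).filter p).card : ℤ) ≤ (k : ℤ) + 2 := by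
  intro k
  induction k using Nat.strong_induction_on with
  | _ k ih =>
    intro x
    match k with
    | 0 =>
        have : ((Finset.Icc x (x + (0:ℤ))).filter p).card ≤ (Finset.Icc x (x + (0:ℤ))).card :=
          Finset.card_filter_le _ _
        rw [Int.card_Icc] at this
        simp at this ⊢
        omega
    | 1 =>
        have h1 := pair_card p hp x
        have he : ((1:ℕ):ℤ) = 1 := by norm_num
        rw [he]
        omega
    | (k+2) =>
        have hsplit : Finset.Icc x (x + ((k:ℤ)+2)) =
            Finset.Icc x (x+1) ∪ Finset.Icc (x+2) (x + ((k:ℤ)+2)) := by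
          ext n
          simp only [Finset.mem_Icc, Finset.mem_union]
          omega
        have h1 := pair_card p hp x
        have h2 := ih k (by omega) (x+2)
        have hc : ((Finset.Icc x (x + ((k:ℤ)+2))).filter p).card
            ≤ ((Finset.Icc x (x+1)).filter p).card
              + ((Finset.Icc (x+2) (x + ((k:ℤ)+2))).filter p).card := by
          rw [hsplit, Finset.filter_union]
          exact Finset.card_union_le _ _
        have he : x + 2 + (k:ℤ) = x + ((k:ℤ)+2) := by ring
        rw [he] at h2
        have hcast : ((k:ℤ)+2) = (((k+2 : ℕ)):ℤ) := by push_cast; ring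
        rw [← hcast]
        omega
lemma exp_sub_int (t : ℝ) (j : ℤ) :
    Complex.exp (2*Real.pi*Complex.I*((t - j : ℝ) : ℂ)) = Complex.exp (2*Real.pi*Complex.I*(t:ℂ)) := by
  rw [show ((t - j : ℝ) : ℂ) = (t:ℂ) - (j:ℂ) by push_cast; ring, mul_sub, Complex.exp_sub,
    show (2*(Real.pi:ℂ)*Complex.I*(j:ℂ)) = (j:ℂ)*(2*Real.pi*Complex.I) by ring,
    Complex.exp_int_mul_two_pi_mul_I]
  simp

lemma cexp_enorm_one (t : ℝ) : ‖Complex.exp (2*Real.pi*Complex.I*(t:ℂ))‖ = 1 := by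
  rw [show (2*(Real.pi:ℂ)*Complex.I*(t:ℂ)) = ((2*Real.pi*t : ℝ):ℂ)*Complex.I by push_cast; ring]
  exact Complex.norm_exp_ofReal_mul_I _

set_option maxHeartbeats 2000000 in
theorem mainpos (a b ρ : ℝ) (f f' f'' : ℝ → ℝ) (hab : a < b) (hρ : 0 < ρ)
    (hd1 : ∀ u ∈ Set.Icc a b, HasDerivAt f (f' u) u)
    (hd2 : ∀ u ∈ Set.Icc a b, HasDerivAt f' (f'' u) u)
    (hcv : ∀ u ∈ Set.Icc a b, ρ ≤ f'' u) :
    ‖∑ n ∈ Finset.Icc ⌈a⌉ ⌊b⌋,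
        Complex.exp (2 * Real.pi * Complex.I * (f (n:ℝ) : ℂ))‖
      ≤ (|f' b - f' a| + 2) * (4 * ρ ^ (-(1:ℝ)/2) + 9) := by
  -- mean value tools
  have incr : ∀ u v : ℝ, a ≤ u → u < v → v ≤ b → f' u + ρ*(v-u) ≤ f' v := by
    intro u v hu huv hv
    have hmem : Set.Icc u v ⊆ Set.Icc a b := Set.Icc_subset_Icc hu hv
    have hcont : ContinuousOn f' (Set.Icc u v) := fun x hx =>
      ((hd2 x (hmem hx)).continuousAt).continuousWithinAt
    have hder : ∀ x ∈ Set.Ioo u v, HasDerivAt f' (f'' x) x := fun x hx =>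
      hd2 x (hmem ⟨le_of_lt hx.1, le_of_lt hx.2⟩)
    obtain ⟨ξ, hξ, hsl⟩ := exists_hasDerivAt_eq_slope f' f'' huv hcont hder
    have hρξ : ρ ≤ f'' ξ := hcv ξ (hmem ⟨le_of_lt hξ.1, le_of_lt hξ.2⟩)
    rw [eq_div_iff (by intro h; rw [sub_eq_zero] at h; exact (ne_of_gt huv) h)] at hsl
    nlinarith
  have f'le : ∀ u v : ℝ, a ≤ u → u ≤ v → v ≤ b → f' u ≤ f' v := by
    intro u v hu huv hv
    rcases eq_or_lt_of_le huv with rfl | h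
    · exact le_refl _
    · nlinarith [incr u v hu h hv]
  have fmvt : ∀ u v : ℝ, a ≤ u → u < v → v ≤ b →
      ∃ ξ, u < ξ ∧ ξ < v ∧ f v - f u = f' ξ * (v - u) := by
    intro u v hu huv hv
    have hmem : Set.Icc u v ⊆ Set.Icc a b := Set.Icc_subset_Icc hu hv
    have hcont : ContinuousOn f (Set.Icc u v) := fun x hx =>
      ((hd1 x (hmem hx)).continuousAt).continuousWithinAt
    have hder : ∀ x ∈ Set.Ioo u v, HasDerivAt f (f' x) x := fun x hx =>
      hd1 x (hmem ⟨le_of_lt hx.1, le_of_lt hx.2⟩)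
    obtain ⟨ξ, hξ, hsl⟩ := exists_hasDerivAt_eq_slope f f' huv hcont hder
    refine ⟨ξ, hξ.1, hξ.2, ?_⟩
    rw [eq_div_iff (by intro h; rw [sub_eq_zero] at h; exact (ne_of_gt huv) h)] at hsl
    linarith [hsl]
  set Ψ : ℝ → ℝ := fun u => f (u+1) - f u with hΨ
  have ψval : ∀ n : ℤ, a ≤ (n:ℝ) → (n:ℝ)+1 ≤ b → f' a ≤ Ψ (n:ℝ) ∧ Ψ (n:ℝ) ≤ f' b := by
    intro n hn hn1
    obtain ⟨ξ, h1, h2, h3⟩ := fmvt (n:ℝ) ((n:ℝ)+1) hn (by linarith) hn1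
    have hΨξ : Ψ (n:ℝ) = f' ξ := by rw [hΨ]; simp only; rw [h3]; ring
    rw [hΨξ]
    exact ⟨f'le a ξ (le_refl a) (by linarith) (by linarith),
      f'le ξ b (by linarith) (by linarith) (le_refl b)⟩
  have ψgap : ∀ n : ℤ, a ≤ (n:ℝ) → (n:ℝ)+2 ≤ b → Ψ (n:ℝ) + ρ ≤ Ψ ((n:ℝ)+1) := by
    intro n hn hn2
    have hΨd : ∀ x ∈ Set.Ioo (n:ℝ) ((n:ℝ)+1), HasDerivAt Ψ (f' (x+1) - f' x) x := by
      intro x hx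
      have h1 : HasDerivAt (fun u : ℝ => f (u+1)) (f' (x+1)) x := by
        have hx1 := hd1 (x+1) ⟨by linarith [hx.1], by linarith [hx.2]⟩
        have := hx1.comp x (((hasDerivAt_id x).add_const 1))
        simpa [Function.comp_def] using this
      exact h1.sub (hd1 x ⟨by linarith [hx.1], by linarith [hx.2]⟩)
    have hcont : ContinuousOn Ψ (Set.Icc (n:ℝ) ((n:ℝ)+1)) := by
      intro x hx
      have h1 : HasDerivAt (fun u : ℝ => f (u+1)) (f' (x+1)) x := by
        have hx1 := hd1 (x+1) ⟨by linarith [hx.1], by linarith [hx.2]⟩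
        have := hx1.comp x (((hasDerivAt_id x).add_const 1))
        simpa [Function.comp_def] using this
      exact ((h1.sub (hd1 x ⟨by linarith [hx.1], by linarith [hx.2]⟩)).continuousAt).continuousWithinAt
    obtain ⟨ξ, hξ, hsl⟩ := exists_hasDerivAt_eq_slope Ψ (fun x => f' (x+1) - f' x)
      (by linarith : (n:ℝ) < (n:ℝ)+1) hcont hΨd
    rw [show ((n:ℝ)+1 - n) = 1 by ring, div_one] at hsl
    have h3 := incr ξ (ξ+1) (by linarith [hξ.1]) (by linarith) (by linarith [hξ.2])
    linarith
  have ψgaps : ∀ n m : ℤ, n ≤ m → a ≤ (n:ℝ) → (m:ℝ)+1 ≤ b →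
      Ψ (n:ℝ) + ρ*((m:ℝ)-(n:ℝ)) ≤ Ψ (m:ℝ) := by
    intro n
    refine Int.le_induction ?_ ?_
    · intro _ _; norm_num
    · intro m hm ih han hb'
      have hcast : (n:ℝ) ≤ (m:ℝ) := Int.cast_le.mpr hm
      have hmb : (m:ℝ)+1 ≤ b := by push_cast at hb' ⊢; linarith
      have h1 := ih han hmb
      have h2 := ψgap m (le_trans han hcast) (by push_cast at hb' ⊢; linarith)
      push_cast at h1 h2 ⊢
      linarith
  have ψmono : ∀ n m : ℤ, n ≤ m → a ≤ (n:ℝ) → (m:ℝ)+1 ≤ b → Ψ (n:ℝ) ≤ Ψ (m:ℝ) := by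
    intro n m hnm han hmb
    have := ψgaps n m hnm han hmb
    have hcast : (n:ℝ) ≤ (m:ℝ) := Int.cast_le.mpr hnm
    nlinarith
  -- the splitting parameter
  set δ : ℝ := min (Real.sqrt ρ) (1/2) with hδdef
  have hδ : 0 < δ := lt_min (Real.sqrt_pos.mpr hρ) (by norm_num)
  have hδ2 : δ ≤ 1/2 := min_le_right _ _
  -- color function
  set c : ℝ → ℤ := fun u => ⌊u+δ⌋ + ⌊u-δ⌋ with hcdef
  have cmono : ∀ u v : ℝ, u ≤ v → c u ≤ c v := fun u v huv =>
    add_le_add (Int.floor_le_floor (by linarith)) (Int.floor_le_floor (by linarith))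
  have cfloors : ∀ u : ℝ, ⌊u-δ⌋ ≤ ⌊u+δ⌋ ∧ ⌊u+δ⌋ ≤ ⌊u-δ⌋ + 1 := by
    intro u
    constructor
    · exact Int.floor_le_floor (by linarith)
    · have h := Int.floor_le_floor (show u+δ ≤ (u-δ)+1 by linarith)
      rwa [Int.floor_add_one] at h
  have goodchar : ∀ (u : ℝ) (j : ℤ), c u = 2*j → (j:ℝ)+δ ≤ u ∧ u < (j:ℝ)+1-δ := by
    intro u j hc
    obtain ⟨h1, h2⟩ := cfloors u
    rw [hcdef] at hc
    simp only at hc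
    have hfl : ⌊u-δ⌋ = j ∧ ⌊u+δ⌋ = j := by omega
    constructor
    · have := Int.floor_le (u-δ)
      rw [hfl.1] at this
      linarith
    · have := Int.lt_floor_add_one (u+δ)
      rw [hfl.2] at this
      push_cast at this
      linarith
  have badchar : ∀ (u : ℝ) (j : ℤ), c u = 2*j+1 → (j:ℝ)+1-δ ≤ u ∧ u < (j:ℝ)+1+δ := by
    intro u j hc
    obtain ⟨h1, h2⟩ := cfloors u
    rw [hcdef] at hc
    simp only at hc
    have hfl : ⌊u-δ⌋ = j ∧ ⌊u+δ⌋ = j+1 := by omega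
    constructor
    · have := Int.floor_le (u+δ)
      rw [hfl.2] at this
      push_cast at this
      linarith
    · have := Int.lt_floor_add_one (u-δ)
      rw [hfl.1] at this
      push_cast at this
      linarith
  -- the exponential
  set e : ℤ → ℂ := fun n => Complex.exp (2 * Real.pi * Complex.I * ((f (n:ℝ) : ℝ) : ℂ)) with hedef
  have henorm : ∀ n : ℤ, ‖e n‖ = 1 := fun n => cexp_enorm_one _
  have herec : ∀ n : ℤ, e (n+1) = e n * Complex.exp (2*Real.pi*Complex.I*((Ψ (n:ℝ) : ℝ) : ℂ)) := by
    intro n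
    rw [hedef]
    simp only
    rw [← Complex.exp_add]
    congr 1
    rw [hΨ]
    push_cast
    ring
  -- good blocks via Kusmin–Landau
  have goodblock : ∀ p r : ℤ, p ≤ r → a ≤ (p:ℝ) → (r:ℝ) ≤ b → ∀ j : ℤ,
      (∀ n : ℤ, p ≤ n → n ≤ r-1 → c (Ψ (n:ℝ)) = 2*j) →
      ‖∑ n ∈ Finset.Icc p r, e n‖ ≤ 1/δ + 1 := by
    intro p r hpr hap hrb j hall
    rw [sum_Icc_int p r hpr]
    have hm : ((r-p).toNat : ℤ) = r - p := Int.toNat_of_nonneg (by omega)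
    apply KL hδ hδ2 ((r-p).toNat) (fun i => e (p+(i:ℤ))) (fun i => Ψ ((p+(i:ℤ) : ℤ) : ℝ) - j)
    · intro i _
      exact henorm _
    · intro i hi
      have hlt : (i:ℤ) < r - p := by omega
      have h1 : (p + ((i+1 : ℕ) : ℤ)) = (p + i) + 1 := by push_cast; ring
      rw [h1, herec (p + (i:ℤ)), exp_sub_int]
    · intro i hi
      have hlt : (i:ℤ) < r - p := by omega
      have hcol := hall (p+(i:ℤ)) (by omega) (by omega)
      obtain ⟨hl, hr⟩ := goodchar _ j hcol
      push_cast at hl hr ⊢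
      constructor <;> linarith
    · intro i hi
      have hlt : (i:ℤ) + 1 < r - p := by omega
      have hgap := ψgap (p+(i:ℤ)) (by push_cast; exact le_trans hap (by exact_mod_cast by omega))
        (by push_cast at hrb ⊢; have : ((p:ℝ) + i) + 2 ≤ r := by exact_mod_cast by omega
            linarith)
      have h1 : ((p + ((i+1 : ℕ) : ℤ) : ℤ) : ℝ) = ((p + (i:ℤ) : ℤ) : ℝ) + 1 := by push_cast; ring
      rw [h1]
      push_cast at hgap ⊢
      linarith
  -- bad blocks: few points
  have badblock : ∀ p r : ℤ, p ≤ r → a ≤ (p:ℝ) → (r:ℝ) ≤ b → ∀ j : ℤ,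
      (∀ n : ℤ, p ≤ n → n ≤ r-1 → c (Ψ (n:ℝ)) = 2*j+1) →
      ‖∑ n ∈ Finset.Icc p r, e n‖ ≤ 2*δ/ρ + 2 := by
    intro p r hpr hap hrb j hall
    have hcount : ‖∑ n ∈ Finset.Icc p r, e n‖ ≤ ((r - p + 1 : ℤ) : ℝ) := by
      calc ‖∑ n ∈ Finset.Icc p r, e n‖ ≤ ∑ n ∈ Finset.Icc p r, ‖e n‖ := norm_sum_le _ _
        _ = ∑ n ∈ Finset.Icc p r, 1 := by
            exact Finset.sum_congr rfl (fun n _ => henorm n)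
        _ = ((r - p + 1 : ℤ) : ℝ) := by
            rw [Finset.sum_const, Int.card_Icc, nsmul_eq_mul, mul_one]
            have h : ((r + 1 - p).toNat : ℤ) = r - p + 1 := by omega
            exact_mod_cast congrArg (fun z : ℤ => (z:ℝ)) h
    rcases eq_or_lt_of_le hpr with rfl | hlt
    · have : ‖∑ n ∈ Finset.Icc p p, e n‖ = 1 := by
        rw [Finset.Icc_self, Finset.sum_singleton, henorm]
      rw [this]
      have : 0 < 2*δ/ρ := by positivity
      linarith
    · have h1 := badchar _ j (hall p le_rfl (by omega))
      have h2 := badchar _ j (hall (r-1) (by omega) le_rfl)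
      have hgaps := ψgaps p (r-1) (by omega) hap
        (by push_cast at hrb ⊢; linarith)
      push_cast at hgaps h1 h2
      have hcnt : ρ * ((r:ℝ) - 1 - p) < 2*δ := by linarith
      have hdiv : ((r:ℝ) - 1 - p) < 2*δ/ρ := by
        rw [lt_div_iff₀ hρ]
        linarith [mul_comm ρ ((r:ℝ) - 1 - p)]
      have hfin : ((r - p + 1 : ℤ) : ℝ) ≤ 2*δ/ρ + 2 := by
        push_cast
        linarith
      linarith
  have hδinv : (0:ℝ) < 1/δ := by positivity
  have hPg1 : (1:ℝ) ≤ 1/δ+1 := by linarith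
  have hPb1 : (1:ℝ) ≤ 2*δ/ρ+2 := by
    have : (0:ℝ) ≤ 2*δ/ρ := by positivity
    linarith
  have hPg0 : (0:ℝ) ≤ 1/δ+1 := by linarith
  have hPb0 : (0:ℝ) ≤ 2*δ/ρ+2 := by linarith
  -- the main block-decomposition induction
  have key : ∀ m : ℕ, ∀ M N : ℤ, (N - M).toNat = m → M ≤ N → a ≤ (M:ℝ) → (N:ℝ) ≤ b →
      ∀ x y : ℤ, x ≤ y →
      (∀ n : ℤ, M ≤ n → n ≤ N-1 → x ≤ c (Ψ (n:ℝ)) ∧ c (Ψ (n:ℝ)) ≤ y) →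
      ‖∑ n ∈ Finset.Icc M N, e n‖ ≤
        (1/δ+1) * (((Finset.Icc x y).filter (fun n => Even n)).card : ℝ)
        + (2*δ/ρ+2) * (((Finset.Icc x y).filter (fun n => Odd n)).card : ℝ) := by
    intro m
    induction m using Nat.strong_induction_on with
    | _ m ih =>
    intro M N hm hMN haM hNb x y hxy hcol
    have hcard1 : 1 ≤ (Finset.Icc x y).card := by
      rw [Int.card_Icc]; omega
    have hEOcard : ((Finset.Icc x y).filter (fun n => Even n)).card
        + ((Finset.Icc x y).filter (fun n => Odd n)).card = (Finset.Icc x y).card := by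
      have h := Finset.card_filter_add_card_filter_not
        (s := Finset.Icc x y) (p := fun n => Even n)
      have heq : (Finset.Icc x y).filter (fun n => ¬ Even n)
          = (Finset.Icc x y).filter (fun n => Odd n) :=
        Finset.filter_congr (fun n _ => by simp [Int.not_even_iff_odd])
      rw [heq] at h
      omega
    rcases eq_or_lt_of_le hMN with rfl | hlt
    · rw [Finset.Icc_self, Finset.sum_singleton, henorm]
      set E := ((Finset.Icc x y).filter (fun n => Even n)).card with hE
      set O := ((Finset.Icc x y).filter (fun n => Odd n)).card with hO
      have h1 : 1 ≤ E + O := by omega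
      have h1' : (1:ℝ) ≤ (E:ℝ) + (O:ℝ) := by exact_mod_cast h1
      nlinarith [Nat.cast_nonneg (α := ℝ) E, Nat.cast_nonneg (α := ℝ) O]
    · -- M < N : at least one edge
      set k : ℤ := c (Ψ (M:ℝ)) with hk
      obtain ⟨hxk, hky⟩ := hcol M le_rfl (by omega)
      set s : Finset ℤ := (Finset.Icc (M+1) (N-1)).filter (fun n => c (Ψ (n:ℝ)) ≠ k) with hs
      -- a block bound: for any endpoint q with edges [M,q-1] monochromatic of color k
      have blockbd : ∀ q : ℤ, M ≤ q → q ≤ N →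
          (∀ n : ℤ, M ≤ n → n ≤ q-1 → c (Ψ (n:ℝ)) = k) →
          (Even k → ‖∑ n ∈ Finset.Icc M q, e n‖ ≤ 1/δ+1) ∧
          (Odd k → ‖∑ n ∈ Finset.Icc M q, e n‖ ≤ 2*δ/ρ+2) := by
        intro q hMq hqN hmono
        have haq : (q:ℝ) ≤ b := le_trans (by exact_mod_cast Int.cast_le.mpr hqN) hNb
        constructor
        · rintro ⟨j, hj⟩
          exact goodblock M q hMq haM haq j
            (fun n h1 h2 => by rw [hmono n h1 h2, hj]; ring)
        · rintro ⟨j, hj⟩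
          exact badblock M q hMq haM haq j
            (fun n h1 h2 => by rw [hmono n h1 h2, hj])
      by_cases hsne : s.Nonempty
      · -- there is a color change at q
        obtain ⟨q, hqs, hqmin'⟩ : ∃ q ∈ s, ∀ n ∈ s, q ≤ n :=
          ⟨s.min' hsne, s.min'_mem hsne, fun n hn => s.min'_le n hn⟩
        rw [hs, Finset.mem_filter, Finset.mem_Icc] at hqs
        obtain ⟨⟨hq1, hq2⟩, hq3⟩ := hqs
        have hqmin : ∀ n : ℤ, M+1 ≤ n → n ≤ N-1 → c (Ψ (n:ℝ)) ≠ k → q ≤ n := by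
          intro n h1 h2 h3
          exact hqmin' n (by rw [hs, Finset.mem_filter, Finset.mem_Icc]; exact ⟨⟨h1, h2⟩, h3⟩)
        have hblock : ∀ n : ℤ, M ≤ n → n ≤ q-1 → c (Ψ (n:ℝ)) = k := by
          intro n h1 h2
          rcases eq_or_lt_of_le h1 with rfl | h1'
          · rfl
          · by_contra hcon
            have := hqmin n (by omega) (by omega) hcon
            omega
        -- split the sum
        have hun : Finset.Icc M q ∪ Finset.Icc (q+1) N = Finset.Icc M N := by
          ext n
          simp only [Finset.mem_union, Finset.mem_Icc]
          omega
        have hdisj : Disjoint (Finset.Icc M q) (Finset.Icc (q+1) N) := by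
          rw [Finset.disjoint_left]
          intro n hn hn'
          rw [Finset.mem_Icc] at hn hn'
          omega
        have hsplitsum : ∑ n ∈ Finset.Icc M N, e n
            = ∑ n ∈ Finset.Icc M q, e n + ∑ n ∈ Finset.Icc (q+1) N, e n := by
          rw [← hun, Finset.sum_union hdisj]
        -- monotonicity of colors
        have hΨMq : Ψ (M:ℝ) ≤ Ψ (q:ℝ) := by
          apply ψmono M q (by omega) haM
          have : ((q:ℝ)+1) ≤ (N:ℝ) := by exact_mod_cast by omega
          linarith
        have hcqk : k + 1 ≤ c (Ψ (q:ℝ)) := by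
          have := cmono _ _ hΨMq
          omega
        have hcqy : c (Ψ (q:ℝ)) ≤ y := (hcol q (by omega) (by omega)).2
        have hk1y : k + 1 ≤ y := le_trans hcqk hcqy
        -- IH on the right part
        have hih := ih ((N - (q+1)).toNat) (by omega) (q+1) N rfl (by omega)
          (by push_cast; push_cast at haM; have : (M:ℝ) ≤ (q:ℝ) := by exact_mod_cast by omega
              linarith) hNb (k+1) y hk1y ?_
        swap
        · intro n h1 h2
          refine ⟨?_, (hcol n (by omega) h2).2⟩
          have hψ : Ψ (q:ℝ) ≤ Ψ (n:ℝ) := by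
            apply ψmono q n (by omega)
            · have : (M:ℝ) ≤ (q:ℝ) := by exact_mod_cast by omega
              linarith
            · have : ((n:ℝ)+1) ≤ (N:ℝ) := by exact_mod_cast by omega
              linarith
          have := cmono _ _ hψ
          omega
        -- block bound on the left part
        have hbb := blockbd q (by omega) (by omega) hblock
        rw [hsplitsum]
        have htri := norm_add_le (∑ n ∈ Finset.Icc M q, e n) (∑ n ∈ Finset.Icc (q+1) N, e n)
        rcases Int.even_or_odd k with hke | hko
        · -- k even
          obtain ⟨j, hj⟩ := hke
          have hb1 := hbb.1 ⟨j, hj⟩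
          have hEins : ((Finset.Icc (k+1) y).filter (fun n => Even n)).card + 1
              ≤ ((Finset.Icc x y).filter (fun n => Even n)).card := by
            have hsub : insert k ((Finset.Icc (k+1) y).filter (fun n => Even n))
                ⊆ (Finset.Icc x y).filter (fun n => Even n) := by
              intro n hn
              rcases Finset.mem_insert.mp hn with rfl | hn'
              · exact Finset.mem_filter.mpr ⟨Finset.mem_Icc.mpr ⟨hxk, hky⟩, ⟨j, hj⟩⟩
              · rw [Finset.mem_filter, Finset.mem_Icc] at hn' ⊢
                exact ⟨⟨by omega, hn'.1.2⟩, hn'.2⟩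
            have hnm : k ∉ (Finset.Icc (k+1) y).filter (fun n => Even n) := by
              rw [Finset.mem_filter, Finset.mem_Icc]
              intro hcon
              omega
            have := Finset.card_le_card hsub
            rwa [Finset.card_insert_of_notMem hnm] at this
          have hOsub : ((Finset.Icc (k+1) y).filter (fun n => Odd n)).card
              ≤ ((Finset.Icc x y).filter (fun n => Odd n)).card :=
            Finset.card_le_card (Finset.filter_subset_filter _ (Finset.Icc_subset_Icc (by omega) le_rfl))
          have hE' : (((Finset.Icc (k+1) y).filter (fun n => Even n)).card : ℝ) + 1
              ≤ (((Finset.Icc x y).filter (fun n => Even n)).card : ℝ) := by exact_mod_cast hEins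
          have hO' : (((Finset.Icc (k+1) y).filter (fun n => Odd n)).card : ℝ)
              ≤ (((Finset.Icc x y).filter (fun n => Odd n)).card : ℝ) := by exact_mod_cast hOsub
          have m1 := mul_le_mul_of_nonneg_left hE' hPg0
          have m2 := mul_le_mul_of_nonneg_left hO' hPb0
          calc ‖∑ n ∈ Finset.Icc M q, e n + ∑ n ∈ Finset.Icc (q+1) N, e n‖
              ≤ ‖∑ n ∈ Finset.Icc M q, e n‖ + ‖∑ n ∈ Finset.Icc (q+1) N, e n‖ := htri
            _ ≤ (1/δ+1) + ((1/δ+1) * (((Finset.Icc (k+1) y).filter (fun n => Even n)).card : ℝ)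
                  + (2*δ/ρ+2) * (((Finset.Icc (k+1) y).filter (fun n => Odd n)).card : ℝ)) := by
                exact add_le_add hb1 hih
            _ ≤ (1/δ+1) * (((Finset.Icc x y).filter (fun n => Even n)).card : ℝ)
                + (2*δ/ρ+2) * (((Finset.Icc x y).filter (fun n => Odd n)).card : ℝ) := by
                nlinarith [m1, m2]
        · -- k odd
          obtain ⟨j, hj⟩ := hko
          have hb1 := hbb.2 ⟨j, hj⟩
          have hOins : ((Finset.Icc (k+1) y).filter (fun n => Odd n)).card + 1
              ≤ ((Finset.Icc x y).filter (fun n => Odd n)).card := by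
            have hsub : insert k ((Finset.Icc (k+1) y).filter (fun n => Odd n))
                ⊆ (Finset.Icc x y).filter (fun n => Odd n) := by
              intro n hn
              rcases Finset.mem_insert.mp hn with rfl | hn'
              · exact Finset.mem_filter.mpr ⟨Finset.mem_Icc.mpr ⟨hxk, hky⟩, ⟨j, hj⟩⟩
              · rw [Finset.mem_filter, Finset.mem_Icc] at hn' ⊢
                exact ⟨⟨by omega, hn'.1.2⟩, hn'.2⟩
            have hnm : k ∉ (Finset.Icc (k+1) y).filter (fun n => Odd n) := by
              rw [Finset.mem_filter, Finset.mem_Icc]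
              intro hcon
              omega
            have := Finset.card_le_card hsub
            rwa [Finset.card_insert_of_notMem hnm] at this
          have hEsub : ((Finset.Icc (k+1) y).filter (fun n => Even n)).card
              ≤ ((Finset.Icc x y).filter (fun n => Even n)).card :=
            Finset.card_le_card (Finset.filter_subset_filter _ (Finset.Icc_subset_Icc (by omega) le_rfl))
          have hO' : (((Finset.Icc (k+1) y).filter (fun n => Odd n)).card : ℝ) + 1
              ≤ (((Finset.Icc x y).filter (fun n => Odd n)).card : ℝ) := by exact_mod_cast hOins
          have hE' : (((Finset.Icc (k+1) y).filter (fun n => Even n)).card : ℝ)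
              ≤ (((Finset.Icc x y).filter (fun n => Even n)).card : ℝ) := by exact_mod_cast hEsub
          have m1 := mul_le_mul_of_nonneg_left hE' hPg0
          have m2 := mul_le_mul_of_nonneg_left hO' hPb0
          calc ‖∑ n ∈ Finset.Icc M q, e n + ∑ n ∈ Finset.Icc (q+1) N, e n‖
              ≤ ‖∑ n ∈ Finset.Icc M q, e n‖ + ‖∑ n ∈ Finset.Icc (q+1) N, e n‖ := htri
            _ ≤ (2*δ/ρ+2) + ((1/δ+1) * (((Finset.Icc (k+1) y).filter (fun n => Even n)).card : ℝ)
                  + (2*δ/ρ+2) * (((Finset.Icc (k+1) y).filter (fun n => Odd n)).card : ℝ)) := by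
                exact add_le_add hb1 hih
            _ ≤ (1/δ+1) * (((Finset.Icc x y).filter (fun n => Even n)).card : ℝ)
                + (2*δ/ρ+2) * (((Finset.Icc x y).filter (fun n => Odd n)).card : ℝ) := by
                nlinarith [m1, m2]
      · -- all edges the same color: one block
        have hblock : ∀ n : ℤ, M ≤ n → n ≤ N-1 → c (Ψ (n:ℝ)) = k := by
          intro n h1 h2
          rcases eq_or_lt_of_le h1 with rfl | h1'
          · rfl
          · by_contra hcon
            exact hsne ⟨n, by rw [hs, Finset.mem_filter, Finset.mem_Icc]; exact ⟨⟨by omega, h2⟩, hcon⟩⟩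
        have hbb := blockbd N hMN le_rfl hblock
        rcases Int.even_or_odd k with hke | hko
        · have hb1 := hbb.1 hke
          obtain ⟨j, hj⟩ := hke
          have hmem : k ∈ (Finset.Icc x y).filter (fun n => Even n) :=
            Finset.mem_filter.mpr ⟨Finset.mem_Icc.mpr ⟨hxk, hky⟩, ⟨j, hj⟩⟩
          have hE1 : 1 ≤ ((Finset.Icc x y).filter (fun n => Even n)).card :=
            Finset.card_pos.mpr ⟨k, hmem⟩
          have hE1' : (1:ℝ) ≤ (((Finset.Icc x y).filter (fun n => Even n)).card : ℝ) := by
            exact_mod_cast hE1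
          nlinarith [Nat.cast_nonneg (α := ℝ) (((Finset.Icc x y).filter (fun n => Odd n)).card)]
        · have hb1 := hbb.2 hko
          obtain ⟨j, hj⟩ := hko
          have hmem : k ∈ (Finset.Icc x y).filter (fun n => Odd n) :=
            Finset.mem_filter.mpr ⟨Finset.mem_Icc.mpr ⟨hxk, hky⟩, ⟨j, hj⟩⟩
          have hO1 : 1 ≤ ((Finset.Icc x y).filter (fun n => Odd n)).card :=
            Finset.card_pos.mpr ⟨k, hmem⟩
          have hO1' : (1:ℝ) ≤ (((Finset.Icc x y).filter (fun n => Odd n)).card : ℝ) := by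
            exact_mod_cast hO1
          nlinarith [Nat.cast_nonneg (α := ℝ) (((Finset.Icc x y).filter (fun n => Even n)).card)]
  -- final assembly
  rcases lt_or_ge ⌊b⌋ ⌈a⌉ with hMN | hMN
  · rw [Finset.Icc_eq_empty (by exact_mod_cast not_le.mpr hMN), Finset.sum_empty, norm_zero]
    have h1 : (0:ℝ) ≤ |f' b - f' a| := abs_nonneg _
    have h2 : (0:ℝ) ≤ ρ ^ (-(1:ℝ)/2) := Real.rpow_nonneg hρ.le _
    nlinarith
  · have haM : a ≤ (⌈a⌉ : ℝ) := Int.le_ceil a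
    have hNb : ((⌊b⌋ : ℤ) : ℝ) ≤ b := Int.floor_le b
    have hxy : c (f' a) ≤ c (f' b) := cmono _ _ (f'le a b le_rfl hab.le le_rfl)
    have hcol : ∀ n : ℤ, ⌈a⌉ ≤ n → n ≤ ⌊b⌋-1 →
        c (f' a) ≤ c (Ψ (n:ℝ)) ∧ c (Ψ (n:ℝ)) ≤ c (f' b) := by
      intro n h1 h2
      have hn1 : ((n:ℝ)+1) ≤ b := by
        have : ((n+1 : ℤ) : ℝ) ≤ ((⌊b⌋ : ℤ) : ℝ) := Int.cast_le.mpr (by omega)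
        push_cast at this
        linarith
      have hv := ψval n (le_trans haM (Int.cast_le.mpr h1)) hn1
      exact ⟨cmono _ _ hv.1, cmono _ _ hv.2⟩
    have hkey := key ((⌊b⌋ - ⌈a⌉).toNat) ⌈a⌉ ⌊b⌋ rfl hMN haM hNb (c (f' a)) (c (f' b)) hxy hcol
    -- cardinality bounds
    set x : ℤ := c (f' a) with hx
    set y : ℤ := c (f' b) with hy
    have hpe : ∀ n : ℤ, Even n → ¬ Even (n+1) := by
      intro n h1 h2
      rw [Int.even_iff] at h1 h2
      omega
    have hpo : ∀ n : ℤ, Odd n → ¬ Odd (n+1) := by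
      intro n h1 h2
      rw [Int.odd_iff] at h1 h2
      omega
    have halt_even : 2 * ((((Finset.Icc x y).filter (fun n => Even n)).card : ℤ)) ≤ (y - x) + 2 := by
      have h := alt_count (fun n => Even n) hpe ((y - x).toNat) x
      rw [show x + ((y-x).toNat : ℤ) = y by omega] at h
      omega
    have halt_odd : 2 * ((((Finset.Icc x y).filter (fun n => Odd n)).card : ℤ)) ≤ (y - x) + 2 := by
      have h := alt_count (fun n => Odd n) hpo ((y - x).toNat) x
      rw [show x + ((y-x).toNat : ℤ) = y by omega] at h
      omega
    have hΔ : 0 ≤ f' b - f' a := by linarith [f'le a b le_rfl hab.le le_rfl]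
    have hyx : ((y:ℝ) - (x:ℝ)) ≤ 2*(f' b - f' a) + 2 := by
      have h1 := Int.floor_le (f' b + δ)
      have h2 := Int.lt_floor_add_one (f' a + δ)
      have h3 := Int.floor_le (f' b - δ)
      have h4 := Int.lt_floor_add_one (f' a - δ)
      rw [hy, hx, hcdef]
      push_cast
      linarith
    have hEb : ((((Finset.Icc x y).filter (fun n => Even n)).card : ℝ)) ≤ (f' b - f' a) + 2 := by
      have h : ((2 * ((((Finset.Icc x y).filter (fun n => Even n)).card : ℤ)) : ℤ) : ℝ)
          ≤ (((y - x) + 2 : ℤ) : ℝ) := by exact_mod_cast halt_even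
      push_cast at h
      linarith
    have hOb : ((((Finset.Icc x y).filter (fun n => Odd n)).card : ℝ)) ≤ (f' b - f' a) + 2 := by
      have h : ((2 * ((((Finset.Icc x y).filter (fun n => Odd n)).card : ℤ)) : ℤ) : ℝ)
          ≤ (((y - x) + 2 : ℤ) : ℝ) := by exact_mod_cast halt_odd
      push_cast at h
      linarith
    -- constant bound
    have hsqpos : 0 < Real.sqrt ρ := Real.sqrt_pos.mpr hρ
    have hrpow : ρ ^ (-(1:ℝ)/2) = (Real.sqrt ρ)⁻¹ := by
      rw [show (-(1:ℝ)/2) = -(1/2:ℝ) by ring, Real.rpow_neg hρ.le, Real.sqrt_eq_rpow]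
    have hPsum : (1/δ+1) + (2*δ/ρ+2) ≤ 4 * ρ ^ (-(1:ℝ)/2) + 9 := by
      rcases le_or_gt ρ (1/4) with hρ4 | hρ4
      · have hδeq : δ = Real.sqrt ρ := by
          rw [hδdef]
          apply min_eq_left
          have h := Real.sqrt_le_sqrt (show ρ ≤ (1/4:ℝ) from hρ4)
          rwa [show ((1:ℝ)/4) = (1/2)^2 by norm_num, Real.sqrt_sq (by norm_num)] at h
        have hρeq : ρ = Real.sqrt ρ * Real.sqrt ρ := (Real.mul_self_sqrt hρ.le).symm
        have h2 : 2*δ/ρ = 2/Real.sqrt ρ := by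
          rw [hδeq]
          rw [hρeq]
          field_simp
          simp only [Real.sqrt_sq hsqpos.le, le_refl]
        have h1 : 1/δ = 1/Real.sqrt ρ := by rw [hδeq]
        rw [h1, h2, hrpow, inv_eq_one_div]
        have : 0 < 1/Real.sqrt ρ := by positivity
        have h3 : 2/Real.sqrt ρ = 2*(1/Real.sqrt ρ) := by ring
        rw [h3]
        linarith
      · have hδeq : δ = 1/2 := by
          rw [hδdef]
          apply min_eq_right
          have h := Real.sqrt_le_sqrt (show (1/4:ℝ) ≤ ρ by linarith)
          rwa [show ((1:ℝ)/4) = (1/2)^2 by norm_num, Real.sqrt_sq (by norm_num)] at h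
        have h1 : 1/δ = 2 := by rw [hδeq]; norm_num
        have h2 : 2*δ/ρ = 1/ρ := by rw [hδeq]; ring
        have h3 : 1/ρ ≤ 4 := by
          rw [div_le_iff₀ hρ]
          linarith
        have h4 : 0 ≤ ρ ^ (-(1:ℝ)/2) := Real.rpow_nonneg hρ.le _
        rw [h1, h2]
        linarith
    have habs : |f' b - f' a| = f' b - f' a := abs_of_nonneg hΔ
    rw [habs]
    have hfin1 : (1/δ+1) * ((((Finset.Icc x y).filter (fun n => Even n)).card : ℝ))
        ≤ (1/δ+1) * ((f' b - f' a) + 2) := mul_le_mul_of_nonneg_left hEb hPg0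
    have hfin2 : (2*δ/ρ+2) * ((((Finset.Icc x y).filter (fun n => Odd n)).card : ℝ))
        ≤ (2*δ/ρ+2) * ((f' b - f' a) + 2) := mul_le_mul_of_nonneg_left hOb hPb0
    have hfin3 : ((1/δ+1) + (2*δ/ρ+2)) * ((f' b - f' a) + 2)
        ≤ (4 * ρ ^ (-(1:ℝ)/2) + 9) * ((f' b - f' a) + 2) :=
      mul_le_mul_of_nonneg_right hPsum (by linarith)
    calc ‖∑ n ∈ Finset.Icc ⌈a⌉ ⌊b⌋, e n‖
        ≤ (1/δ+1) * ((((Finset.Icc x y).filter (fun n => Even n)).card : ℝ))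
          + (2*δ/ρ+2) * ((((Finset.Icc x y).filter (fun n => Odd n)).card : ℝ)) := hkey
      _ ≤ ((1/δ+1) + (2*δ/ρ+2)) * ((f' b - f' a) + 2) := by linarith
      _ ≤ (4 * ρ ^ (-(1:ℝ)/2) + 9) * ((f' b - f' a) + 2) := hfin3
      _ = ((f' b - f' a) + 2) * (4 * ρ ^ (-(1:ℝ)/2) + 9) := by ring

theorem stmt5 :
    ∃ C : ℝ, ∀ (a b ρ : ℝ) (f f' f'' : ℝ → ℝ), a < b → 0 < ρ →
      (∀ u ∈ Set.Icc a b, HasDerivAt f (f' u) u) →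
      (∀ u ∈ Set.Icc a b, HasDerivAt f' (f'' u) u) →
      ((∀ u ∈ Set.Icc a b, ρ ≤ f'' u) ∨ (∀ u ∈ Set.Icc a b, f'' u ≤ -ρ)) →
      ‖∑ n ∈ Finset.Icc ⌈a⌉ ⌊b⌋,
          Complex.exp (2 * Real.pi * Complex.I * (f (n:ℝ) : ℂ))‖
        ≤ (|f' b - f' a| + 2) * (4 * ρ ^ (-(1:ℝ)/2) + C) := by
  refine ⟨9, ?_⟩
  intro a b ρ f f' f'' hab hρ hd1 hd2 hcv
  rcases hcv with hpos | hneg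
  · exact mainpos a b ρ f f' f'' hab hρ hd1 hd2 hpos
  · have hd1' : ∀ u ∈ Set.Icc a b, HasDerivAt (fun x => -f x) (-f' u) u :=
      fun u hu => (hd1 u hu).neg
    have hd2' : ∀ u ∈ Set.Icc a b, HasDerivAt (fun x => -f' x) (-f'' u) u :=
      fun u hu => (hd2 u hu).neg
    have hcv' : ∀ u ∈ Set.Icc a b, ρ ≤ -f'' u := fun u hu => by linarith [hneg u hu]
    have hmain := mainpos a b ρ (fun x => -f x) (fun x => -f' x) (fun x => -f'' x)
      hab hρ hd1' hd2' hcv'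
    have hconj : ∑ n ∈ Finset.Icc ⌈a⌉ ⌊b⌋,
          Complex.exp (2 * Real.pi * Complex.I * ((f (n:ℝ) : ℝ) : ℂ))
        = (starRingEnd ℂ) (∑ n ∈ Finset.Icc ⌈a⌉ ⌊b⌋,
            Complex.exp (2 * Real.pi * Complex.I * ((-f (n:ℝ) : ℝ) : ℂ))) := by
      rw [map_sum]
      apply Finset.sum_congr rfl
      intro n _
      rw [← Complex.exp_conj]
      congr 1
      have : (starRingEnd ℂ) (2 * Real.pi * Complex.I * ((-f (n:ℝ) : ℝ) : ℂ))
          = (starRingEnd ℂ) (2 * (Real.pi:ℂ)) * (starRingEnd ℂ) Complex.I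
            * (starRingEnd ℂ) ((-f (n:ℝ) : ℝ) : ℂ) := by
        rw [← map_mul, ← map_mul]
      rw [this, Complex.conj_I]
      rw [show ((2 * (Real.pi:ℂ))) = (((2*Real.pi : ℝ)):ℂ) by push_cast; ring]
      rw [Complex.conj_ofReal, Complex.conj_ofReal]
      push_cast
      ring
    rw [hconj, RCLike.norm_conj]
    have habs2 : |f' b - f' a| = |(-f' b) - (-f' a)| := by
      rw [show (-f' b) - (-f' a) = -(f' b - f' a) by ring, abs_neg]
    rw [habs2]
    exact hmain
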